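/- Let {Y_n} be a supermartingale and T a stopping time such that the family of negative parts {Y_{min(T,n)}^-}_{n∈ℕ} is uniformly integrable. Then Y_T := lim_n Y_{min(T,n)} exists almost surely, is integrable, and E[Y_T] ≤ E[Y_0]. -/

import Mathlib

open MeasureTheory Filter Topology
open scoped ENNReal NNReal

/-- The process `Y` stopped at the (possibly infinite) stopping time `T`. -/
noncomputable def stoppedAt {Ω : Type*} (Y : ℕ → Ω → ℝ) (T : Ω → ℕ∞) (n : ℕ) (ω : Ω) : ℝ :=
  Y (min (T ω) (n : ℕ∞)).toNat ω

/-- `T : Ω → ℕ ∪ {∞}` is a stopping time w.r.t. the filtration `f`. -/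
def IsStoppingTimeENat {Ω : Type*} {m : MeasurableSpace Ω} (f : Filtration ℕ m)
    (T : Ω → ℕ∞) : Prop :=
  ∀ n : ℕ, MeasurableSet[f n] {ω | T ω ≤ (n : ℕ∞)}

lemma enat_toNat_min_coe (k N : ℕ) : ((min (k : ℕ∞) (N : ℕ∞)).toNat) = min k N := by
  rcases le_total k N with h | h
  · rw [min_eq_left (by exact_mod_cast h), ENat.toNat_coe, min_eq_left h]
  · rw [min_eq_right (by exact_mod_cast h), ENat.toNat_coe, min_eq_right h]


lemma real_abs_eq_add_two_neg_part (x : ℝ) : |x| = x + 2 * max 0 (-x) := by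
  rcases le_total 0 x with h | h
  · rw [abs_of_nonneg h, max_eq_left (by linarith)]; ring
  · rw [abs_of_nonpos h, max_eq_right (by linarith)]; ring

lemma real_pos_part_eq (x : ℝ) : max 0 x = x + max 0 (-x) := by
  rcases le_total 0 x with h | h
  · rw [max_eq_right h, max_eq_left (by linarith)]; ring
  · rw [max_eq_left h, max_eq_right (by linarith)]; ring

lemma real_sub_parts (x : ℝ) : max 0 x - max 0 (-x) = x := by
  rcases le_total 0 x with h | h
  · rw [max_eq_right h, max_eq_left (by linarith)]; ring
  · rw [max_eq_left h, max_eq_right (by linarith)]; ring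

lemma real_neg_neg_part_le (x : ℝ) : -(max 0 (-x)) ≤ x := by
  rcases le_total 0 x with h | h
  · rw [max_eq_left (by linarith)]; linarith
  · rw [max_eq_right (by linarith)]; linarith

/-- Optional stopping for supermartingales with uniformly integrable negative parts: if
`{Y n}` is a supermartingale, `T` a stopping time, and the family `{Y_{min(T,n)}⁻}` is
uniformly integrable, then `Y_T = lim_n Y_{min(T,n)}` exists a.s., is integrable, and
`E[Y_T] ≤ E[Y_0]`. -/
theorem optional_stopping_of_ui_neg_parts {Ω : Type*} {m : MeasurableSpace Ω}
    {μ : Measure Ω} [IsProbabilityMeasure μ] (f : Filtration ℕ m) (Y : ℕ → Ω → ℝ)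
    (T : Ω → ℕ∞) (hY : Supermartingale Y f μ) (hT : IsStoppingTimeENat f T)
    (hUIneg : UniformIntegrable (fun n ω => max 0 (-(stoppedAt Y T n ω))) 1 μ) :
    ∃ YT : Ω → ℝ, Integrable YT μ ∧
      (∀ᵐ ω ∂μ, Tendsto (fun n => stoppedAt Y T n ω) atTop (𝓝 (YT ω))) ∧
      ∫ ω, YT ω ∂μ ≤ ∫ ω, Y 0 ω ∂μ := by
  set Z : ℕ → Ω → ℝ := stoppedAt Y T with hZdef
  set τ : ℕ → Ω → ℕ := fun N ω => (min (T ω) (N : ℕ∞)).toNat with hτdef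
  -- each truncated time is a stopping time
  have hτ : ∀ N, IsStoppingTime f (fun ω => (WithTop.some (τ N ω) : WithTop ℕ)) := by
    intro N n
    simp only [WithTop.coe_le_coe]
    by_cases hnN : N ≤ n
    · have : {ω | τ N ω ≤ n} = Set.univ := by
        ext ω
        simp only [Set.mem_setOf_eq, Set.mem_univ, iff_true, hτdef]
        exact le_trans (ENat.toNat_le_of_le_coe (min_le_right _ _)) hnN
      rw [this]; exact MeasurableSet.univ
    · have : {ω | τ N ω ≤ n} = {ω | T ω ≤ (n : ℕ∞)} := by
        ext ω
        simp only [Set.mem_setOf_eq, hτdef]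
        induction (T ω) using ENat.recTopCoe with
        | top => simp [Nat.le_of_lt_succ]; omega
        | coe k => rw [enat_toNat_min_coe, Nat.cast_le]; omega
      rw [this]; exact hT n
  -- identification with mathlib's stoppedProcess
  have hZsp : ∀ n N : ℕ, n ≤ N → Z n = MeasureTheory.stoppedProcess Y (fun ω => (WithTop.some (τ N ω) : WithTop ℕ)) n := by
    intro n N hnN
    funext ω
    show Y (min (T ω) (n : ℕ∞)).toNat ω = Y (min n (τ N ω)) ω
    congr 1
    show (min (T ω) (n : ℕ∞)).toNat = min n ((min (T ω) (N : ℕ∞)).toNat)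
    induction (T ω) using ENat.recTopCoe with
    | top => simp [hnN, min_comm]
    | coe k => rw [enat_toNat_min_coe, enat_toNat_min_coe]; omega
  have hSP : ∀ N, Supermartingale (MeasureTheory.stoppedProcess Y (fun ω => (WithTop.some (τ N ω) : WithTop ℕ))) f μ := by
    intro N
    have h1 : Submartingale (MeasureTheory.stoppedProcess (-Y) (fun ω => (WithTop.some (τ N ω) : WithTop ℕ))) f μ :=
      hY.neg.stoppedProcess (hτ N)
    have h2 : MeasureTheory.stoppedProcess (-Y) (fun ω => (WithTop.some (τ N ω) : WithTop ℕ))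
        = -(MeasureTheory.stoppedProcess Y (fun ω => (WithTop.some (τ N ω) : WithTop ℕ))) := by
      funext n ω; rfl
    rw [h2] at h1
    simpa using h1.neg
  -- the stopped process is a supermartingale
  have hZ : Supermartingale Z f μ := by
    refine ⟨fun n => ?_, fun i j hij => ?_, fun n => ?_⟩
    · rw [hZsp n n le_rfl]; exact (hSP n).stronglyAdapted n
    · rw [hZsp i j hij, hZsp j j le_rfl]; exact (hSP j).2.1 i j hij
    · rw [hZsp n n le_rfl]; exact (hSP n).integrable n
  set K : ℝ := ∫ ω, Y 0 ω ∂μ with hKdef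
  have hZ0 : Z 0 = Y 0 := by
    funext ω
    show Y (min (T ω) ((0 : ℕ) : ℕ∞)).toNat ω = Y 0 ω
    congr 1
    simp
  have hKn : ∀ n, ∫ ω, Z n ω ∂μ ≤ K := by
    intro n
    have h := hZ.setIntegral_le (Nat.zero_le n) (MeasurableSet.univ (α := Ω))
    rw [hKdef, ← hZ0]
    simpa [setIntegral_univ] using h
  -- negative parts
  set Zneg : ℕ → Ω → ℝ := fun n ω => max 0 (-(Z n ω)) with hZnegdef
  have hZnegint : ∀ n, Integrable (Zneg n) μ := by
    intro n
    have h := (hZ.integrable n).neg_part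
    simpa [hZnegdef, max_comm] using h
  have hZnegnn : ∀ n ω, 0 ≤ Zneg n ω := fun n ω => le_max_left _ _
  obtain ⟨C, hC⟩ := hUIneg.2.2
  have hCZ : ∀ n, eLpNorm (Zneg n) 1 μ ≤ (C : ℝ≥0∞) := hC
  have hbC : ∀ n, ∫ ω, Zneg n ω ∂μ ≤ (C : ℝ) := by
    intro n
    have h1 : ENNReal.ofReal (∫ ω, ‖Zneg n ω‖ ∂μ) = eLpNorm (Zneg n) 1 μ := by
      rw [eLpNorm_one_eq_lintegral_enorm, ofReal_integral_norm_eq_lintegral_enorm (hZnegint n)]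
    have h2 : ENNReal.ofReal (∫ ω, ‖Zneg n ω‖ ∂μ) ≤ (C : ℝ≥0∞) := h1 ▸ hCZ n
    have h3 := ENNReal.toReal_mono ENNReal.coe_ne_top h2
    rw [ENNReal.toReal_ofReal (integral_nonneg fun ω => norm_nonneg _)] at h3
    calc ∫ ω, Zneg n ω ∂μ = ∫ ω, ‖Zneg n ω‖ ∂μ := by
          refine integral_congr_ae (ae_of_all _ fun ω => ?_)
          exact (Real.norm_of_nonneg (hZnegnn n ω)).symm
      _ ≤ (C : ℝ) := by simpa using h3
  -- L¹ bound for Z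
  have habs : ∀ n, ∫ ω, ‖Z n ω‖ ∂μ = (∫ ω, Z n ω ∂μ) + 2 * ∫ ω, Zneg n ω ∂μ := by
    intro n
    have hpt : ∀ ω, ‖Z n ω‖ = Z n ω + 2 * Zneg n ω := fun ω =>
      (Real.norm_eq_abs _).trans (real_abs_eq_add_two_neg_part (Z n ω))
    calc ∫ ω, ‖Z n ω‖ ∂μ = ∫ ω, (Z n ω + 2 * Zneg n ω) ∂μ :=
          integral_congr_ae (ae_of_all _ hpt)
      _ = (∫ ω, Z n ω ∂μ) + ∫ ω, 2 * Zneg n ω ∂μ :=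
          integral_add (hZ.integrable n) ((hZnegint n).const_mul 2)
      _ = (∫ ω, Z n ω ∂μ) + 2 * ∫ ω, Zneg n ω ∂μ := by rw [integral_const_mul]
  set R : ℝ≥0 := (K + 2 * (C : ℝ)).toNNReal with hRdef
  have hbdd : ∀ n, eLpNorm ((-Z) n) 1 μ ≤ (R : ℝ≥0∞) := by
    intro n
    have hn : (-Z) n = -(Z n) := rfl
    rw [hn, eLpNorm_neg, eLpNorm_one_eq_lintegral_enorm,
      ← ofReal_integral_norm_eq_lintegral_enorm (hZ.integrable n)]
    have h1 : ∫ ω, ‖Z n ω‖ ∂μ ≤ K + 2 * (C : ℝ) := by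
      rw [habs n]
      have := hKn n
      have := hbC n
      linarith
    calc ENNReal.ofReal (∫ ω, ‖Z n ω‖ ∂μ) ≤ ENNReal.ofReal (K + 2 * (C : ℝ)) :=
          ENNReal.ofReal_le_ofReal h1
      _ = (R : ℝ≥0∞) := rfl
  -- martingale convergence
  have hsub : Submartingale (-Z) f μ := hZ.neg
  set G : Ω → ℝ := f.limitProcess (-Z) μ with hGdef
  have h1 : ∀ᵐ ω ∂μ, Tendsto (fun n => (-Z) n ω) atTop (𝓝 (G ω)) :=
    hsub.ae_tendsto_limitProcess hbdd
  have hGmem : MemLp G 1 μ := hsub.memLp_limitProcess hbdd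
  set YT : Ω → ℝ := fun ω => -(G ω) with hYTdef
  have hYTint : Integrable YT μ := (hGmem.integrable le_rfl).neg
  have htendsto : ∀ᵐ ω ∂μ, Tendsto (fun n => Z n ω) atTop (𝓝 (YT ω)) := by
    filter_upwards [h1] with ω hω
    have := hω.neg
    simpa using this
  refine ⟨YT, hYTint, htendsto, ?_⟩
  -- negative part of the limit
  set g : Ω → ℝ := fun ω => max 0 (-(YT ω)) with hgdef
  have hgint : Integrable g μ := by
    have h := hYTint.neg_part
    simpa [hgdef, max_comm] using h
  have h_tend_neg : ∀ᵐ ω ∂μ, Tendsto (fun n => Zneg n ω) atTop (𝓝 (g ω)) := by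
    filter_upwards [htendsto] with ω hω
    exact tendsto_const_nhds.max hω.neg
  have hL1 : Tendsto (fun n => eLpNorm (Zneg n - g) 1 μ) atTop (𝓝 0) :=
    tendsto_Lp_finite_of_tendsto_ae le_rfl ENNReal.one_ne_top
      (fun n => (hZnegint n).aestronglyMeasurable)
      (memLp_one_iff_integrable.mpr hgint) hUIneg.2.1 h_tend_neg
  set B : ℝ := ∫ ω, g ω ∂μ with hBdef
  have hb : Tendsto (fun n => ∫ ω, Zneg n ω ∂μ) atTop (𝓝 B) := by
    refine tendsto_integral_of_L1 g hgint.aestronglyMeasurable (Eventually.of_forall hZnegint) ?_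
    have : ∀ n, (∫⁻ ω, ‖Zneg n ω - g ω‖ₑ ∂μ) = eLpNorm (Zneg n - g) 1 μ := by
      intro n
      rw [eLpNorm_one_eq_lintegral_enorm]
      rfl
    simp_rw [this]
    exact hL1
  -- 0 ≤ K + B
  have hKB : 0 ≤ K + B := by
    have hn : ∀ n, -(∫ ω, Zneg n ω ∂μ) ≤ K := by
      intro n
      have hle : ∫ ω, -(Zneg n ω) ∂μ ≤ ∫ ω, Z n ω ∂μ := by
        exact integral_mono (hZnegint n).neg (hZ.integrable n) fun ω =>
          real_neg_neg_part_le (Z n ω)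
      rw [integral_neg] at hle
      exact hle.trans (hKn n)
    have := le_of_tendsto' hb.neg hn
    linarith
  -- positive parts and Fatou
  set Zpos : ℕ → Ω → ℝ := fun n ω => max 0 (Z n ω) with hZposdef
  have hZposint : ∀ n, Integrable (Zpos n) μ := by
    intro n
    have h := (hZ.integrable n).pos_part
    simpa [hZposdef, max_comm] using h
  set YTpos : Ω → ℝ := fun ω => max 0 (YT ω) with hYTposdef
  have hYTposint : Integrable YTpos μ := by
    have h := hYTint.pos_part
    simpa [hYTposdef, max_comm] using h
  set A : ℝ := ∫ ω, YTpos ω ∂μ with hAdef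
  have hsum : ∀ n, ∫ ω, Zpos n ω ∂μ = (∫ ω, Z n ω ∂μ) + ∫ ω, Zneg n ω ∂μ := by
    intro n
    have hpt : ∀ ω, Zpos n ω = Z n ω + Zneg n ω := fun ω => real_pos_part_eq (Z n ω)
    calc ∫ ω, Zpos n ω ∂μ = ∫ ω, (Z n ω + Zneg n ω) ∂μ :=
          integral_congr_ae (ae_of_all _ hpt)
      _ = _ := integral_add (hZ.integrable n) (hZnegint n)
  have hFatou : ENNReal.ofReal A ≤ ENNReal.ofReal (K + B) := by
    have hof : ∀ n, ENNReal.ofReal (∫ ω, Zpos n ω ∂μ) = ∫⁻ ω, ENNReal.ofReal (Zpos n ω) ∂μ :=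
      fun n => ofReal_integral_eq_lintegral_ofReal (hZposint n)
        (ae_of_all _ fun ω => le_max_left _ _)
    calc ENNReal.ofReal A = ∫⁻ ω, ENNReal.ofReal (YTpos ω) ∂μ :=
          ofReal_integral_eq_lintegral_ofReal hYTposint (ae_of_all _ fun ω => le_max_left _ _)
      _ = ∫⁻ ω, liminf (fun n => ENNReal.ofReal (Zpos n ω)) atTop ∂μ := by
          refine lintegral_congr_ae ?_
          filter_upwards [htendsto] with ω hω
          have ht : Tendsto (fun n => ENNReal.ofReal (Zpos n ω)) atTop
              (𝓝 (ENNReal.ofReal (YTpos ω))) :=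
            (ENNReal.continuous_ofReal.tendsto _).comp (tendsto_const_nhds.max hω)
          exact ht.liminf_eq.symm
      _ ≤ liminf (fun n => ∫⁻ ω, ENNReal.ofReal (Zpos n ω) ∂μ) atTop :=
          lintegral_liminf_le' fun n =>
            (ENNReal.measurable_ofReal.comp_aemeasurable (hZposint n).aemeasurable)
      _ ≤ liminf (fun n => ENNReal.ofReal (K + ∫ ω, Zneg n ω ∂μ)) atTop := by
          refine liminf_le_liminf (Eventually.of_forall fun n => ?_)
          rw [← hof n]
          refine ENNReal.ofReal_le_ofReal ?_
          rw [hsum n]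
          have := hKn n
          linarith
      _ = ENNReal.ofReal (K + B) :=
          Tendsto.liminf_eq ((ENNReal.continuous_ofReal.tendsto _).comp
            (tendsto_const_nhds.add hb))
  have hAKB : A ≤ K + B := (ENNReal.ofReal_le_ofReal_iff hKB).mp hFatou
  have hYTsplit : ∫ ω, YT ω ∂μ = A - B := by
    have hpt : ∀ ω, YT ω = YTpos ω - g ω := fun ω => (real_sub_parts (YT ω)).symm
    calc ∫ ω, YT ω ∂μ = ∫ ω, (YTpos ω - g ω) ∂μ := integral_congr_ae (ae_of_all _ hpt)
      _ = A - B := integral_sub hYTposint hgint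
  rw [hYTsplit]
  linarith
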